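/- arXiv:0806.1818 — 2 statements merged into one kernel-verified Lean document; each statement's English description precedes it below -/
import Mathlib

section
/- For every line l (indeed for every subset l ⊆ E with r(l) ≤ 2) and all flats S, T of M, the inequality a(S)_l + a(T)_l ≤ a(cl(S ∪ T))_l + a(S ∩ T)_l holds; i.e., the function F ↦ a(F)_l is supermodular on the lattice of flats of M. -/
open Set

variable {α : Type*}

/-- The rank of a set in a matroid: the supremum of the cardinalities of its
independent subsets. -/
noncomputable def Matroid.rk' (M : Matroid α) (X : Set α) : ℕ :=
  sSup {n : ℕ | ∃ I, M.Indep I ∧ I ⊆ X ∧ I.ncard = n}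

/-- A matroid is loopless if the closure of the empty set is empty. -/
def Matroid.Loopless' (M : Matroid α) : Prop := M.closure ∅ = ∅

/-- A line of a matroid: a subset of the ground set of rank 1 or 2. -/
def Matroid.IsLine (M : Matroid α) (l : Set α) : Prop :=
  l ⊆ M.E ∧ (M.rk' l = 1 ∨ M.rk' l = 2)

open scoped Classical in
/-- Degree `a(X)_l` of a set `X` at a line `l`. -/
noncomputable def deg (X l : Set α) : ℕ :=
  if X ∩ l = ∅ then 0 else if l ⊆ X then 2 else 1

/-- A fractional matching of the pair `(M, L)`. -/
def IsFracMatching (M : Matroid α) (L : Finset (Set α)) (x : Set α → ℝ) : Prop :=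
  (∀ l ∈ L, 0 ≤ x l) ∧
  ∀ F : Set α, M.IsFlat F → ∑ l ∈ L, (deg F l : ℝ) * x l ≤ (M.rk' F : ℝ)

/-- `a(y)_l` for a finitely supported `y` on flats. -/
noncomputable def aDual (y : Set α →₀ ℝ) (l : Set α) : ℝ :=
  y.sum fun F c => c * (deg F l : ℝ)

/-- `r(y)` for a finitely supported `y` on flats. -/
noncomputable def rDual (M : Matroid α) (y : Set α →₀ ℝ) : ℝ :=
  y.sum fun F c => c * (M.rk' F : ℝ)

/-- Any independent subset of `X` gives a lower bound for `rk' X`. -/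
lemma ncard_le_rk' (M : Matroid α) [M.RankFinite] {I X : Set α}
    (hI : M.Indep I) (hIX : I ⊆ X) : I.ncard ≤ M.rk' X := by
  obtain ⟨B₀, hB₀, hB₀fin⟩ := ‹M.RankFinite›.exists_finite_isBase
  have hbdd : BddAbove {n : ℕ | ∃ J, M.Indep J ∧ J ⊆ X ∧ J.ncard = n} := by
    refine ⟨B₀.ncard, ?_⟩
    rintro n ⟨J, hJ, -, rfl⟩
    obtain ⟨B, hB, hJB⟩ := hJ.exists_isBase_superset
    have hBfin : B.Finite := by
      have h := hB.encard_eq_encard_of_isBase hB₀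
      exact (Set.finite_iff_finite_of_encard_eq_encard h).mpr hB₀fin
    have h1 : J.ncard ≤ B.ncard := Set.ncard_le_ncard hJB hBfin
    have h2 : B.ncard = B₀.ncard := by
      have h := hB.encard_eq_encard_of_isBase hB₀
      simp [Set.ncard_def, h]
    omega
  exact le_csSup hbdd ⟨I, hI, hIX, rfl⟩

lemma deg_mono {X Y l : Set α} (h : X ⊆ Y) : deg X l ≤ deg Y l := by
  classical
  by_cases h1 : X ∩ l = ∅
  · simp [deg, h1]
  · have h2 : Y ∩ l ≠ ∅ := fun hY => h1 (Set.eq_empty_of_subset_empty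
      ((Set.inter_subset_inter_left l h).trans hY.subset))
    by_cases h3 : l ⊆ X
    · simp [deg, h1, h2, h3, h3.trans h]
    · simp only [deg, if_neg h1, if_neg h2, if_neg h3]
      split_ifs <;> omega

lemma deg_le_two (X l : Set α) : deg X l ≤ 2 := by
  classical
  simp only [deg]; split_ifs <;> omega

/-- the degree function `F ↦ a(F)_l` is supermodular on the lattice
of flats, for any subset `l` of the ground set of rank at most 2. -/
theorem stmt_3 (M : Matroid α) [M.RankFinite] (hM : M.Loopless')
    (l : Set α) (hlE : l ⊆ M.E) (hl : M.rk' l ≤ 2)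
    (S T : Set α) (hS : M.IsFlat S) (hT : M.IsFlat T) :
    deg S l + deg T l ≤ deg (M.closure (S ∪ T)) l + deg (S ∩ T) l := by
  classical
  have hSE := hS.subset_ground
  have hTE := hT.subset_ground
  have hSTE : S ∪ T ⊆ M.E := union_subset hSE hTE
  have hSJ : S ⊆ M.closure (S ∪ T) :=
    subset_union_left.trans (M.subset_closure _ hSTE)
  have hTJ : T ⊆ M.closure (S ∪ T) :=
    subset_union_right.trans (M.subset_closure _ hSTE)
  -- the key matroid-theoretic fact
  have key : ∀ a ∈ S ∩ l, ∀ b ∈ T ∩ l, S ∩ T ∩ l = ∅ → l ⊆ M.closure (S ∪ T) := by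
    rintro a ⟨haS, hal⟩ b ⟨hbT, hbl⟩ hST
    have haT : a ∉ T := fun h => by
      have : a ∈ S ∩ T ∩ l := ⟨⟨haS, h⟩, hal⟩
      rw [hST] at this; exact this
    have haE : a ∈ M.E := hlE hal
    have hbE : b ∈ M.E := hlE hbl
    have hb_indep : M.Indep {b} := by
      have : ({b} : Set α) = insert b ∅ := by simp
      rw [this, M.empty_indep.insert_indep_iff]
      left
      rw [Matroid.Loopless'] at hM
      rw [hM]
      exact ⟨hbE, notMem_empty b⟩
    have hab_indep : M.Indep {a, b} := by
      rw [show ({a, b} : Set α) = insert a {b} from rfl, hb_indep.insert_indep_iff]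
      left
      refine ⟨haE, fun hcl => haT ?_⟩
      have : M.closure {b} ⊆ M.closure T := M.closure_subset_closure (by simpa)
      rw [hT.closure] at this
      exact this hcl
    have habsub : ({a, b} : Set α) ⊆ S ∪ T := by
      rintro x (rfl | rfl)
      · exact Or.inl haS
      · exact Or.inr hbT
    intro x hxl
    have hxE : x ∈ M.E := hlE hxl
    by_cases hxab : x ∈ ({a, b} : Set α)
    · exact M.closure_subset_closure habsub
        (M.subset_closure _ (habsub.trans hSTE) hxab)
    have hxcl : x ∈ M.closure {a, b} := by
      by_contra hx
      rw [hab_indep.notMem_closure_iff_of_notMem hxab hxE] at hx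
      have h3 : ({x, a, b} : Set α).ncard = 3 := by
        have hab : a ≠ b := fun h => haT (h ▸ hbT)
        rw [Set.ncard_insert_of_notMem hxab ((Set.finite_singleton b).insert a),
          Set.ncard_pair hab]
      have hsub : ({x, a, b} : Set α) ⊆ l := by
        rintro y (rfl | rfl | rfl) <;> assumption
      have := ncard_le_rk' M (by rwa [show insert x ({a,b} : Set α) = {x, a, b} from rfl] at hx) hsub
      omega
    exact M.closure_subset_closure habsub hxcl
  -- now case analysis on the degrees
  by_cases hSl : S ∩ l = ∅
  · have h0 : deg S l = 0 := by simp [deg, hSl]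
    have h1 : deg T l ≤ deg (M.closure (S ∪ T)) l := deg_mono hTJ
    omega
  by_cases hTl : T ∩ l = ∅
  · have h0 : deg T l = 0 := by simp [deg, hTl]
    have h1 : deg S l ≤ deg (M.closure (S ∪ T)) l := deg_mono hSJ
    omega
  obtain ⟨a, ha⟩ := Set.nonempty_iff_ne_empty.2 hSl
  obtain ⟨b, hb⟩ := Set.nonempty_iff_ne_empty.2 hTl
  by_cases hST : S ∩ T ∩ l = ∅
  · have hlJ : l ⊆ M.closure (S ∪ T) := key a ha b hb hST
    have hlne : (M.closure (S ∪ T)) ∩ l ≠ ∅ := fun h => by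
      have : a ∈ (M.closure (S ∪ T)) ∩ l := ⟨hSJ ha.1, ha.2⟩
      rw [h] at this; exact this
    have hJ2 : deg (M.closure (S ∪ T)) l = 2 := by simp [deg, hlne, hlJ]
    have hnlS : ¬ l ⊆ S := fun h => by
      have : b ∈ S ∩ T ∩ l := ⟨⟨h hb.2, hb.1⟩, hb.2⟩
      rw [hST] at this; exact this
    have hnlT : ¬ l ⊆ T := fun h => by
      have : a ∈ S ∩ T ∩ l := ⟨⟨ha.1, h ha.2⟩, ha.2⟩
      rw [hST] at this; exact this
    have hS1 : deg S l = 1 := by simp [deg, hSl, hnlS]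
    have hT1 : deg T l = 1 := by simp [deg, hTl, hnlT]
    omega
  · have hST1 : 1 ≤ deg (S ∩ T) l := by
      simp only [deg, if_neg hST]
      split_ifs <;> omega
    by_cases hlS : l ⊆ S
    · have hS2 : deg S l = 2 := by simp [deg, hSl, hlS]
      have hJ2 : deg (M.closure (S ∪ T)) l = 2 := by
        have hlJ : l ⊆ M.closure (S ∪ T) := hlS.trans hSJ
        have hlne : (M.closure (S ∪ T)) ∩ l ≠ ∅ := fun h => by
          have : a ∈ (M.closure (S ∪ T)) ∩ l := ⟨hSJ ha.1, ha.2⟩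
          rw [h] at this; exact this
        simp [deg, hlne, hlJ]
      by_cases hlT : l ⊆ T
      · have hT2 : deg T l = 2 := by simp [deg, hTl, hlT]
        have hST2 : deg (S ∩ T) l = 2 := by
          have h1 : l ⊆ S ∩ T := subset_inter hlS hlT
          simp [deg, hST, h1]
        omega
      · have hT1 : deg T l = 1 := by simp [deg, hTl, hlT]
        omega
    · have hS1 : deg S l = 1 := by simp [deg, hSl, hlS]
      have hT2 : deg T l ≤ 2 := deg_le_two T l
      by_cases hlT : l ⊆ T
      · have hJ2 : deg (M.closure (S ∪ T)) l = 2 := by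
          have hlJ : l ⊆ M.closure (S ∪ T) := hlT.trans hTJ
          have hlne : (M.closure (S ∪ T)) ∩ l ≠ ∅ := fun h => by
            have : a ∈ (M.closure (S ∪ T)) ∩ l := ⟨hSJ ha.1, ha.2⟩
            rw [h] at this; exact this
          simp [deg, hlne, hlJ]
        omega
      · have hT1 : deg T l = 1 := by simp [deg, hTl, hlT]
        have hJ1 : 1 ≤ deg (M.closure (S ∪ T)) l :=
          le_trans (by omega : 1 ≤ deg S l) (deg_mono hSJ)
        omega
end

section
/- Let ∅ = F_0 ⊂ F_1 ⊂ ⋯ ⊂ F_k ⊂ F_{k+1} = E be a chain of flats of M and let X ⊆ E. Writing X_i := X ∩ (F_{i+1} \ F_i) for i = 0,…,k, one has ∑_{i=0}^{k} (r(X_i ∪ F_i) − r(F_i)) ≤ r(X). (The rank of a set does not increase when passing from M to the direct sum of the minors (M|F_{i+1})/F_i.) -/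
open Set

variable {α : Type*}

lemma rk'_eq_ncard {M : Matroid α} [M.RankFinite] {I X : Set α} (hI : M.IsBasis' I X) :
    M.rk' X = I.ncard := by
  have hub : ∀ n ∈ {n : ℕ | ∃ J, M.Indep J ∧ J ⊆ X ∧ J.ncard = n}, n ≤ I.ncard := by
    rintro n ⟨J, hJ, hJX, rfl⟩
    obtain ⟨J', hJ', hJJ'⟩ := hJ.subset_isBasis'_of_subset hJX
    have h1 : J.ncard ≤ J'.ncard := ncard_le_ncard hJJ' hJ'.indep.finite
    have h2 : J'.ncard = I.ncard := by
      rw [ncard_def, hJ'.encard_eq_encard hI, ← ncard_def]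
    omega
  have hmem : I.ncard ∈ {n : ℕ | ∃ J, M.Indep J ∧ J ⊆ X ∧ J.ncard = n} :=
    ⟨I, hI.indep, hI.subset, rfl⟩
  exact le_antisymm (csSup_le ⟨_, hmem⟩ hub) (le_csSup ⟨I.ncard, hub⟩ hmem)

lemma le_rk' {M : Matroid α} [M.RankFinite] {J X : Set α} (hJ : M.Indep J) (hJX : J ⊆ X) :
    J.ncard ≤ M.rk' X := by
  obtain ⟨I, hI⟩ := M.exists_isBasis' X
  rw [rk'_eq_ncard hI]
  obtain ⟨J', hJ', hJJ'⟩ := hJ.subset_isBasis'_of_subset hJX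
  have h1 : J.ncard ≤ J'.ncard := ncard_le_ncard hJJ' hJ'.indep.finite
  have h2 : J'.ncard = I.ncard := by
    rw [ncard_def, hJ'.encard_eq_encard hI, ← ncard_def]
  omega

lemma rk'_submod (M : Matroid α) [M.RankFinite] {A B : Set α} (hA : A ⊆ M.E) (hB : B ⊆ M.E) :
    M.rk' (A ∪ B) + M.rk' (A ∩ B) ≤ M.rk' A + M.rk' B := by
  obtain ⟨I, hI⟩ := M.exists_isBasis (A ∩ B) (inter_subset_left.trans hA)
  obtain ⟨J, hJ, hIJ⟩ := hI.indep.subset_isBasis_of_subset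
    (hI.subset.trans (inter_subset_left.trans subset_union_left)) (union_subset hA hB)
  have hJfin : J.Finite := hJ.indep.finite
  rw [rk'_eq_ncard hJ.isBasis', rk'_eq_ncard hI.isBasis']
  have hA' : (J ∩ A).ncard ≤ M.rk' A := le_rk' (hJ.indep.subset inter_subset_left)
    inter_subset_right
  have hB' : (J ∩ B).ncard ≤ M.rk' B := le_rk' (hJ.indep.subset inter_subset_left)
    inter_subset_right
  have hkey : (J ∩ A).ncard + (J ∩ B).ncard = J.ncard + (J ∩ (A ∩ B)).ncard := by
    have := ncard_union_add_ncard_inter (J ∩ A) (J ∩ B)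
      (hJfin.subset inter_subset_left) (hJfin.subset inter_subset_left)
    rw [← inter_union_distrib_left, ← inter_inter_distrib_left,
      inter_eq_self_of_subset_left hJ.subset] at this
    exact this.symm
  have hIcard : I.ncard ≤ (J ∩ (A ∩ B)).ncard :=
    ncard_le_ncard (subset_inter hIJ hI.subset) (hJfin.subset inter_subset_left)
  omega

lemma rk'_empty (M : Matroid α) [M.RankFinite] : M.rk' ∅ = 0 := by
  have : M.IsBasis' ∅ ∅ := (M.empty_indep.isBasis_self).isBasis'
  rw [rk'_eq_ncard this, ncard_empty]

/-- the rank of a set does not increase when passing from `M` to the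
direct sum of the minors `(M|F_{i+1})/F_i` along a chain of flats. -/
theorem stmt_7 (M : Matroid α) [M.RankFinite] (hM : M.Loopless')
    (k : ℕ) (F : ℕ → Set α) (hF0 : F 0 = ∅) (hFE : F (k+1) = M.E)
    (hFflat : ∀ i ≤ k+1, M.IsFlat (F i)) (hFmono : ∀ i ≤ k, F i ⊂ F (i+1))
    (X : Set α) (hX : X ⊆ M.E) :
    ∑ i ∈ Finset.range (k+1),
        ((M.rk' (X ∩ (F (i+1) \ F i) ∪ F i) : ℤ) - (M.rk' (F i) : ℤ))
      ≤ (M.rk' X : ℤ) := by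
  have hFE' : ∀ i ≤ k+1, F i ⊆ M.E := fun i hi => (hFflat i hi).subset_ground
  have hterm : ∀ i ∈ Finset.range (k+1),
      ((M.rk' (X ∩ (F (i+1) \ F i) ∪ F i) : ℤ) - (M.rk' (F i) : ℤ))
        ≤ (M.rk' (X ∩ F (i+1)) : ℤ) - (M.rk' (X ∩ F i) : ℤ) := by
    intro i hi
    rw [Finset.mem_range] at hi
    have hik : i ≤ k := by omega
    have hmono := (hFmono i hik).subset
    have hU : (X ∩ F (i+1)) ∪ F i = X ∩ (F (i+1) \ F i) ∪ F i := by
      ext x; simp only [mem_union, mem_inter_iff, mem_diff]; tauto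
    have hI : (X ∩ F (i+1)) ∩ F i = X ∩ F i := by
      ext x; simp only [mem_inter_iff]
      exact ⟨fun h => ⟨h.1.1, h.2⟩, fun h => ⟨⟨h.1, hmono h.2⟩, h.2⟩⟩
    have := rk'_submod M (A := X ∩ F (i+1)) (B := F i)
      (inter_subset_right.trans (hFE' (i+1) (by omega))) (hFE' i (by omega))
    rw [hU, hI] at this
    push_cast
    omega
  calc ∑ i ∈ Finset.range (k+1),
        ((M.rk' (X ∩ (F (i+1) \ F i) ∪ F i) : ℤ) - (M.rk' (F i) : ℤ))
      ≤ ∑ i ∈ Finset.range (k+1),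
        ((M.rk' (X ∩ F (i+1)) : ℤ) - (M.rk' (X ∩ F i) : ℤ)) :=
        Finset.sum_le_sum hterm
    _ = (M.rk' (X ∩ F (k+1)) : ℤ) - (M.rk' (X ∩ F 0) : ℤ) :=
        Finset.sum_range_sub (fun i => (M.rk' (X ∩ F i) : ℤ)) (k+1)
    _ ≤ (M.rk' X : ℤ) := by
        rw [hF0, hFE, inter_empty, inter_eq_self_of_subset_left hX, rk'_empty M]
        simp
end
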